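/- Let l1, l2 ≥ 2 be integers, set m = l1·l2 − l1 − l2, and let H be a formal power series over ℚ in one variable u satisfying H · (1 − u · H^m) = 1. Set f = H^{l1·l2}. Then in ℚ[[u]] one has the identity u · f′ = g · f, where f′ is the formal derivative of f and g = ∑_{k ≥ 1} l1·l2 · binomial((l1−1)·(l2−1)·k − 1, k−1) · u^k. -/

import Mathlib

open PowerSeries

lemma coeff_pow_eq (p : ℕ) (H : PowerSeries ℚ) (hH : H = 1 + X * H ^ (p + 1)) :
    ∀ k b : ℕ, PowerSeries.coeff k (H ^ (b + 1)) =
      (b + 1) * ((p + 1) * k + b).factorial / (k.factorial * (p * k + b + 1).factorial) := by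
  have hc : constantCoeff H = 1 := by
    have := congrArg constantCoeff hH
    simpa using this
  intro k
  induction k using Nat.strong_induction_on with
  | _ k ihk =>
    match k with
    | 0 =>
      intro b
      simp only [Nat.mul_zero, Nat.zero_add, Nat.factorial_zero]
      rw [coeff_zero_eq_constantCoeff, map_pow, hc, one_pow]
      rw [Nat.factorial_succ]
      push_cast [Nat.factorial_succ]
      field_simp
    | k + 1 =>
      intro b
      induction b with
      | zero =>
        have h1 : coeff (k+1) (H ^ 1) = coeff k (H ^ (p+1)) := by
          conv_lhs => rw [pow_one, hH]
          simp [coeff_succ_X_mul]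
        rw [h1, ihk k (by omega) p]
        have hf1 : ((p+1)*(k+1) + 0).factorial = ((p+1)*k+p+1) * ((p+1)*k+p).factorial := by
          rw [show (p+1)*(k+1) + 0 = ((p+1)*k+p)+1 by ring, Nat.factorial_succ]
        have hf2 : (k+1).factorial = (k+1) * k.factorial := Nat.factorial_succ k
        have e2 : p * (k+1) + 0 + 1 = p * k + p + 1 := by ring
        rw [hf1, hf2, e2]
        have hk : (k.factorial : ℚ) ≠ 0 := Nat.cast_ne_zero.mpr (Nat.factorial_ne_zero k)
        have hpk : ((p*k+p+1).factorial : ℚ) ≠ 0 := Nat.cast_ne_zero.mpr (Nat.factorial_ne_zero _)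
        push_cast
        field_simp
        ring
      | succ c ihb =>
        have hsplit : H ^ (c + 2) = H ^ (c + 1) + X * H ^ (c + p + 1 + 1) := by
          calc H ^ (c+2) = H ^ (c+1) * H := by ring
          _ = H ^ (c+1) * (1 + X * H ^ (p+1)) := by rw [← hH]
          _ = H ^ (c+1) + X * H ^ (c + p + 1 + 1) := by ring
        rw [hsplit, map_add, coeff_succ_X_mul, ihb, ihk k (by omega) (c + p + 1)]
        have hk : (k.factorial : ℚ) ≠ 0 := Nat.cast_ne_zero.mpr (Nat.factorial_ne_zero k)
        have hf3 : (k+1).factorial = (k+1) * k.factorial := Nat.factorial_succ k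
        have hf1 : ((p+1) * (k+1) + (c+1)).factorial
            = ((p+1)*(k+1)+c+1) * ((p+1)*(k+1)+c).factorial := by
          rw [show (p+1)*(k+1) + (c+1) = ((p+1)*(k+1)+c)+1 by ring, Nat.factorial_succ]
        have hf2 : (p * (k+1) + (c+1) + 1).factorial
            = (p*(k+1)+c+2) * (p*(k+1)+c+1).factorial := by
          rw [show p*(k+1) + (c+1) + 1 = (p*(k+1)+c+1)+1 by ring, Nat.factorial_succ]
        have e3 : (p+1) * k + (c + p + 1) = (p+1) * (k+1) + c := by ring
        have e4 : p * k + (c + p + 1) + 1 = p * (k+1) + c + 2 := by ring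
        have hf4 : (p * (k+1) + c + 2).factorial
            = (p*(k+1)+c+2) * (p*(k+1)+c+1).factorial := by
          rw [show p*(k+1) + c + 2 = (p*(k+1)+c+1)+1 by ring, Nat.factorial_succ]
        rw [hf1, hf2, hf3, e3, e4, hf4]
        have hA : (((p+1)*(k+1)+c).factorial : ℚ) ≠ 0 := Nat.cast_ne_zero.mpr (Nat.factorial_ne_zero _)
        have hB : (((p*(k+1)+c+1)).factorial : ℚ) ≠ 0 := Nat.cast_ne_zero.mpr (Nat.factorial_ne_zero _)
        push_cast
        field_simp
        ring

/-- For `l1, l2 ≥ 2`, `m = l1·l2 − l1 − l2`, and `H ∈ ℚ[[u]]` with `H·(1 − u·H^m) = 1`,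
the series `f = H^(l1·l2)` satisfies `u·f' = g·f` where
`g = ∑_{k ≥ 1} l1·l2·binom((l1−1)(l2−1)k − 1, k−1)·u^k`. -/
theorem central_slope_GW_formula (l1 l2 : ℕ) (hl1 : 2 ≤ l1) (hl2 : 2 ≤ l2)
    (m : ℕ) (hm : m = l1 * l2 - l1 - l2)
    (H : PowerSeries ℚ) (hH : H * (1 - PowerSeries.X * H ^ m) = 1)
    (f g : PowerSeries ℚ) (hf : f = H ^ (l1 * l2))
    (hg : g = PowerSeries.mk fun k =>
      if k = 0 then 0 else
        (l1 * l2 : ℚ) * (Nat.choose ((l1 - 1) * (l2 - 1) * k - 1) (k - 1) : ℚ)) :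
    PowerSeries.X * (PowerSeries.derivative ℚ f) = g * f := by
  -- basic arithmetic facts
  obtain ⟨a, ha⟩ : ∃ a, l1 = a + 2 := ⟨l1 - 2, by omega⟩
  obtain ⟨b, hb⟩ : ∃ b, l2 = b + 2 := ⟨l2 - 2, by omega⟩
  have hmab : m = a*b + a + b := by
    subst ha hb
    have h1 : (a+2) * (b+2) = a*b + 2*a + 2*b + 4 := by ring
    omega
  have hm1 : (l1 - 1) * (l2 - 1) = m + 1 := by
    subst ha hb
    have h2 : (a + 2 - 1) * (b + 2 - 1) = a*b + a + b + 1 := by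
      have : a + 2 - 1 = a + 1 := by omega
      have h3 : b + 2 - 1 = b + 1 := by omega
      rw [this, h3]; ring
    omega
  have hH2 : H = 1 + X * H ^ (m + 1) := by linear_combination hH
  -- coefficient formula for powers of H
  have hcp := coeff_pow_eq m H hH2
  -- the auxiliary series G
  set G : PowerSeries ℚ := PowerSeries.mk fun j => (Nat.choose ((m+1)*j + m) j : ℚ) with hG
  have hcast1 : (((m+1 : ℕ)) : ℚ⟦X⟧) = C (((m+1:ℕ)) : ℚ) := (map_natCast C _).symm
  have hcastm : ((m:ℚ⟦X⟧)) = C ((m:ℚ)) := (map_natCast C m).symm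
  have hdp : derivative ℚ (H ^ (m+1)) = ((m+1:ℕ) : ℚ⟦X⟧) * (H ^ m * derivative ℚ H) := by
    rw [Derivation.leibniz_pow]
    simp only [nsmul_eq_mul, smul_eq_mul, Nat.add_sub_cancel]
  have key2 : ((m+1:ℕ) : ℚ⟦X⟧) * G =
      ((m+1:ℕ) : ℚ⟦X⟧) * H ^ (m+1) + ((m:ℕ):ℚ⟦X⟧) * (X * derivative ℚ (H ^ (m+1))) := by
    ext j
    rw [hcast1, hcastm]
    simp only [map_add, coeff_C_mul]
    match j with
    | 0 =>
      have h0 : coeff 0 (X * derivative ℚ (H ^ (m+1))) = 0 := by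
        rw [coeff_zero_eq_constantCoeff, map_mul, constantCoeff_X, zero_mul]
      rw [h0, mul_zero, add_zero, hG, coeff_mk, hcp 0 m]
      simp only [Nat.mul_zero, Nat.zero_add, Nat.factorial_zero, Nat.choose_zero_right,
        Nat.cast_one, mul_one]
      rw [Nat.factorial_succ]
      push_cast
      have hB : ((m).factorial : ℚ) ≠ 0 := Nat.cast_ne_zero.mpr (Nat.factorial_ne_zero _)
      field_simp
    | i + 1 =>
      have h1 : coeff (i+1) (X * derivative ℚ (H ^ (m+1))) = coeff (i+1) (H ^ (m+1)) * (i+1) := by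
        rw [coeff_succ_X_mul, coeff_derivative]
      rw [h1, hcp (i+1) m, hG, coeff_mk]
      have hle : i + 1 ≤ (m+1)*(i+1) + m := by nlinarith
      rw [Nat.cast_choose ℚ hle]
      have e1 : (m+1)*(i+1) + m - (i+1) = m*(i+1) + m := by
        have h2 : (m+1)*(i+1) = m*(i+1) + (i+1) := by ring
        omega
      rw [e1]
      rw [show (m*(i+1)+m+1).factorial = (m*(i+1)+m+1) * (m*(i+1)+m).factorial
        from Nat.factorial_succ _]
      have hA : (((m+1)*(i+1)+m).factorial : ℚ) ≠ 0 := Nat.cast_ne_zero.mpr (Nat.factorial_ne_zero _)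
      have hB : ((m*(i+1)+m).factorial : ℚ) ≠ 0 := Nat.cast_ne_zero.mpr (Nat.factorial_ne_zero _)
      have hC : ((i+1).factorial : ℚ) ≠ 0 := Nat.cast_ne_zero.mpr (Nat.factorial_ne_zero _)
      push_cast
      field_simp
      ring
  -- g = (l1*l2) * (X * G)
  obtain ⟨n', hn'⟩ : ∃ n', l1 * l2 = n' + 1 := ⟨l1*l2 - 1, by
    have h1 : 0 < l1 * l2 := by positivity
    omega⟩
  have hcastn : ((l1*l2 : ℕ) : ℚ⟦X⟧) = C ((l1*l2 : ℕ) : ℚ) := (map_natCast C _).symm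
  have hg' : g = ((l1*l2 : ℕ) : ℚ⟦X⟧) * (X * G) := by
    rw [hg]
    ext k
    rw [hcastn, coeff_C_mul]
    match k with
    | 0 => simp
    | k + 1 =>
      rw [coeff_mk, coeff_succ_X_mul, hG, coeff_mk]
      simp only [Nat.succ_ne_zero, if_false, Nat.add_sub_cancel]
      rw [hm1]
      have e : (m+1) * (k+1) - 1 = (m+1)*k + m := by
        have h2 : (m+1)*(k+1) = ((m+1)*k + m) + 1 := by ring
        omega
      rw [e]
      push_cast
      ring
  -- derivative relation
  have hdH : derivative ℚ H * (1 - ((m+1:ℕ):ℚ⟦X⟧) * X * H ^ m) = H ^ (m+1) := by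
    have h5 : derivative ℚ H = H ^ (m+1) + X * (((m+1:ℕ):ℚ⟦X⟧) * (H ^ m * derivative ℚ H)) := by
      conv_lhs => rw [hH2]
      rw [map_add, Derivation.map_one_eq_zero, zero_add, Derivation.leibniz, derivative_X, hdp]
      simp only [smul_eq_mul]
      ring
    push_cast at h5 ⊢
    linear_combination h5
  -- E1 : ((m+1) G) W = (m+1) H^m
  have E1 : (((m+1:ℕ):ℚ⟦X⟧) * G) * (1 - ((m+1:ℕ):ℚ⟦X⟧) * X * H ^ m)
      = ((m+1:ℕ):ℚ⟦X⟧) * H ^ m := by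
    push_cast at key2 hdp hdH ⊢
    rw [key2, hdp]
    push_cast
    linear_combination (((m:ℚ⟦X⟧)+1) * H ^ m) * hH2 + ((m:ℚ⟦X⟧) * ((m:ℚ⟦X⟧)+1) * X * H ^ m) * hdH
  -- E2
  have E2 : derivative ℚ f * (1 - ((m+1:ℕ):ℚ⟦X⟧) * X * H ^ m)
      = ((l1*l2 : ℕ):ℚ⟦X⟧) * (H ^ n' * H ^ (m+1)) := by
    have h6 : derivative ℚ f = ((l1*l2:ℕ):ℚ⟦X⟧) * (H ^ n' * derivative ℚ H) := by
      rw [hf, hn', Derivation.leibniz_pow]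
      simp only [nsmul_eq_mul, smul_eq_mul, Nat.add_sub_cancel]
    rw [h6]
    push_cast at hdH ⊢
    linear_combination (((l1:ℚ⟦X⟧) * (l2:ℚ⟦X⟧)) * H ^ n') * hdH
  -- final cancellation
  have hconst : constantCoeff (((m+1:ℕ):ℚ⟦X⟧) * (1 - ((m+1:ℕ):ℚ⟦X⟧) * X * H ^ m))
      = ((m+1:ℕ) : ℚ) := by
    simp [map_mul, map_sub, map_one, constantCoeff_X]
  have hne : (((m+1:ℕ):ℚ⟦X⟧) * (1 - ((m+1:ℕ):ℚ⟦X⟧) * X * H ^ m)) ≠ 0 := by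
    intro h
    rw [h, map_zero] at hconst
    exact (Nat.cast_ne_zero (R := ℚ)).mpr (Nat.succ_ne_zero m) hconst.symm
  apply mul_left_cancel₀ hne
  have hnn : ((l1:ℚ⟦X⟧)) * (l2:ℚ⟦X⟧) = ((n':ℚ⟦X⟧)) + 1 := by
    have h7 : ((l1*l2:ℕ):ℚ⟦X⟧) = ((n'+1:ℕ):ℚ⟦X⟧) := by rw [hn']
    push_cast at h7 ⊢
    exact h7
  conv_rhs => rw [hg', hf, hn']
  push_cast at E1 E2 ⊢
  linear_combination (((m:ℚ⟦X⟧)+1) * X) * E2 - (((l1:ℚ⟦X⟧)*(l2:ℚ⟦X⟧)) * X * H ^ (n'+1)) * E1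
    + (((m:ℚ⟦X⟧)+1) * X * H * H ^ n' * G * (1 - ((m:ℚ⟦X⟧)+1) * X * H ^ m)) * hnn
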